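/- Let (Ω, F, μ) be a probability space, let C > 0 and ρ ∈ ℝ, and let ((W_n, G_n))_{n∈ℕ} be a sequence of ℝ²-valued random vectors that are mutually independent (but not necessarily identically distributed). Assume that for every n: 0 ≤ W_n ≤ C almost surely, 0 ≤ G_n ≤ 1 almost surely, E[W_n] = 1, and E[W_n·G_n] = ρ. Then almost surely (∑_{i=0}^{n−1} W_i·G_i) / (∑_{i=0}^{n−1} W_i) → ρ as n → ∞. In particular, the weighted importance sampling estimator with multiple behavior policies whose action probabilities are bounded below by ε > 0 on the support of the target policy is a consistent estimator of ρ. -/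

import Mathlib

open Filter Finset MeasureTheory ProbabilityTheory

/-- SLLN for independent uniformly bounded centered random variables (not necessarily iid). -/
theorem slln_bdd {Ω : Type*} [MeasurableSpace Ω] (μ : Measure Ω) [IsProbabilityMeasure μ]
    (B : ℝ) (hB : 0 < B) (Y : ℕ → Ω → ℝ) (hYm : ∀ n, Measurable (Y n))
    (hpair : ∀ i j, i ≠ j → IndepFun (Y i) (Y j) μ)
    (hbd : ∀ n, ∀ᵐ ω ∂μ, |Y n ω| ≤ B)
    (hmean : ∀ n, ∫ ω, Y n ω ∂μ = 0) :
    ∀ᵐ ω ∂μ, Tendsto (fun n : ℕ => (∑ i ∈ Finset.range n, Y i ω) / n) atTop (nhds 0) := by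
  set T : ℕ → Ω → ℝ := fun n ω => ∑ i ∈ Finset.range n, Y i ω with hT
  -- integrability
  have hInt : ∀ n, Integrable (Y n) μ :=
    fun n => (integrable_const B).mono' (hYm n).aestronglyMeasurable
      ((hbd n).mono fun ω h => by simpa [Real.norm_eq_abs] using h)
  have hIntMul : ∀ i j, Integrable (fun ω => Y i ω * Y j ω) μ := by
    intro i j
    refine (integrable_const (B * B)).mono' ((hYm i).mul (hYm j)).aestronglyMeasurable ?_
    filter_upwards [hbd i, hbd j] with ω h1 h2
    simpa [Real.norm_eq_abs, abs_mul] using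
      mul_le_mul h1 h2 (abs_nonneg _) hB.le
  -- second moment bound
  have hS2 : ∀ N : ℕ, ∫ ω, (T N ω) ^ 2 ∂μ ≤ N * B ^ 2 := by
    intro N
    have hexp : ∀ ω, (T N ω) ^ 2 =
        ∑ i ∈ Finset.range N, ∑ j ∈ Finset.range N, Y i ω * Y j ω := by
      intro ω; rw [sq, Finset.sum_mul_sum]
    have h1 : ∫ ω, (T N ω) ^ 2 ∂μ =
        ∑ i ∈ Finset.range N, ∑ j ∈ Finset.range N, ∫ ω, Y i ω * Y j ω ∂μ := by
      simp_rw [hexp]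
      rw [integral_finset_sum _ (fun i _ => integrable_finset_sum _ (fun j _ => hIntMul i j))]
      exact Finset.sum_congr rfl fun i _ => integral_finset_sum _ fun j _ => hIntMul i j
    have h2 : ∀ i j, ∫ ω, Y i ω * Y j ω ∂μ = if i = j then ∫ ω, Y i ω ^ 2 ∂μ else 0 := by
      intro i j
      by_cases hij : i = j
      · subst hij; simp [sq]
      · rw [if_neg hij]
        have := (hpair i j hij).integral_mul_eq_mul_integral (hInt i).1 (hInt j).1
        simpa [hmean i, hmean j] using this
    have h3 : ∀ i, ∫ ω, Y i ω ^ 2 ∂μ ≤ B ^ 2 := by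
      intro i
      have : ∀ᵐ ω ∂μ, Y i ω ^ 2 ≤ B ^ 2 := by
        filter_upwards [hbd i] with ω h
        calc Y i ω ^ 2 = |Y i ω| ^ 2 := (sq_abs _).symm
          _ ≤ B ^ 2 := pow_le_pow_left₀ (abs_nonneg _) h 2
      calc ∫ ω, Y i ω ^ 2 ∂μ ≤ ∫ _, B ^ 2 ∂μ :=
            integral_mono_ae (by simpa [sq] using hIntMul i i) (integrable_const _) this
        _ = B ^ 2 := by simp
    rw [h1]
    simp_rw [h2]
    rw [Finset.sum_comm]
    calc (∑ j ∈ Finset.range N, ∑ i ∈ Finset.range N,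
            if i = j then ∫ ω, Y i ω ^ 2 ∂μ else 0)
        = ∑ j ∈ Finset.range N, if j ∈ Finset.range N then ∫ ω, Y j ω ^ 2 ∂μ else 0 := by
          refine Finset.sum_congr rfl fun j hj => ?_
          rw [Finset.sum_ite_eq']
      _ ≤ ∑ _j ∈ Finset.range N, B ^ 2 := by
          refine Finset.sum_le_sum fun j hj => ?_
          rw [if_pos hj]; exact h3 j
      _ = N * B ^ 2 := by simp [mul_comm]
  -- almost-sure uniform bound
  have hbd_all : ∀ᵐ ω ∂μ, ∀ i, |Y i ω| ≤ B := ae_all_iff.2 hbd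
  -- the squared estimates along the subsequence n²
  set f : ℕ → Ω → ℝ := fun n ω => (T (n ^ 2) ω / ((n : ℝ) ^ 2)) ^ 2 with hfdef
  have hTmeas : ∀ N, Measurable (T N) := fun N => Finset.measurable_sum _ fun i _ => hYm i
  have hfmeas : ∀ n, Measurable (f n) := fun n => ((hTmeas (n ^ 2)).div_const _).pow_const 2
  have hfnonneg : ∀ n ω, 0 ≤ f n ω := fun n ω => sq_nonneg _
  have hfint : ∀ n, Integrable (f n) μ := by
    intro n
    refine (integrable_const (B ^ 2)).mono' (hfmeas n).aestronglyMeasurable ?_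
    filter_upwards [hbd_all] with ω hb
    have hTb : |T (n ^ 2) ω| ≤ (n : ℝ) ^ 2 * B := by
      calc |T (n ^ 2) ω| ≤ ∑ i ∈ Finset.range (n ^ 2), |Y i ω| :=
            Finset.abs_sum_le_sum_abs _ _
        _ ≤ ∑ _i ∈ Finset.range (n ^ 2), B := Finset.sum_le_sum fun i _ => hb i
        _ = (n : ℝ) ^ 2 * B := by
            rw [Finset.sum_const, Finset.card_range, nsmul_eq_mul]
            push_cast
            ring
    rcases Nat.eq_zero_or_pos n with h0 | h1
    · subst h0
      simp only [f, T]
      norm_num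
      positivity
    · have hn : (0 : ℝ) < (n : ℝ) ^ 2 := by positivity
      rw [Real.norm_eq_abs, abs_of_nonneg (hfnonneg n ω)]
      have : |T (n ^ 2) ω / ((n : ℝ) ^ 2)| ≤ B := by
        rw [abs_div, abs_of_pos hn, div_le_iff₀ hn]
        calc |T (n ^ 2) ω| ≤ (n : ℝ) ^ 2 * B := hTb
          _ = B * (n : ℝ) ^ 2 := by ring
      calc (T (n ^ 2) ω / ((n : ℝ) ^ 2)) ^ 2 = |T (n ^ 2) ω / ((n : ℝ) ^ 2)| ^ 2 :=
            (sq_abs _).symm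
        _ ≤ B ^ 2 := pow_le_pow_left₀ (abs_nonneg _) this 2
  have key : ∀ n : ℕ, 1 ≤ n → ∫ ω, f n ω ∂μ ≤ B ^ 2 / (n : ℝ) ^ 2 := by
    intro n hn
    have hn' : (1 : ℝ) ≤ (n : ℝ) := by exact_mod_cast hn
    have hc : ((n : ℝ) ^ 2) ^ 2 ≠ 0 := by positivity
    have heq : ∫ ω, f n ω ∂μ = (∫ ω, (T (n ^ 2) ω) ^ 2 ∂μ) / ((n : ℝ) ^ 2) ^ 2 := by
      simp_rw [hfdef, div_pow]
      exact integral_div _ _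
    rw [heq]
    have h1 : (∫ ω, (T (n ^ 2) ω) ^ 2 ∂μ) ≤ ((n ^ 2 : ℕ) : ℝ) * B ^ 2 := hS2 (n ^ 2)
    calc (∫ ω, (T (n ^ 2) ω) ^ 2 ∂μ) / ((n : ℝ) ^ 2) ^ 2
        ≤ (((n ^ 2 : ℕ) : ℝ) * B ^ 2) / ((n : ℝ) ^ 2) ^ 2 := by gcongr
      _ = B ^ 2 / (n : ℝ) ^ 2 := by
          push_cast
          field_simp
  -- summability of the integrals
  have hsum : ∑' n, ∫⁻ ω, ‖f n ω‖₊ ∂μ ≠ ⊤ := by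
    have hb : ∀ n : ℕ, ∫⁻ ω, ‖f n ω‖₊ ∂μ ≤ ENNReal.ofReal (4 * B ^ 2 / ((n : ℝ) + 1) ^ 2) := by
      intro n
      have heq : ∫⁻ ω, ‖f n ω‖₊ ∂μ = ENNReal.ofReal (∫ ω, f n ω ∂μ) := by
        have h0 : ∫⁻ ω, ‖f n ω‖₊ ∂μ = ∫⁻ ω, ENNReal.ofReal (f n ω) ∂μ :=
          lintegral_congr fun ω => Real.enorm_eq_ofReal (hfnonneg n ω)
        rw [h0, ← ofReal_integral_eq_lintegral_ofReal (hfint n)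
          (Eventually.of_forall (hfnonneg n))]
      rw [heq]
      apply ENNReal.ofReal_le_ofReal
      rcases Nat.eq_zero_or_pos n with h0 | h1
      · subst h0
        have : ∀ ω, f 0 ω = 0 := by intro ω; simp [f]
        simp only [this]
        rw [integral_zero]
        positivity
      · have hn' : (1 : ℝ) ≤ (n : ℝ) := by exact_mod_cast h1
        calc ∫ ω, f n ω ∂μ ≤ B ^ 2 / (n : ℝ) ^ 2 := key n h1
          _ ≤ 4 * B ^ 2 / ((n : ℝ) + 1) ^ 2 := by
              rw [div_le_div_iff₀ (by positivity) (by positivity)]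
              have hx : (0:ℝ) ≤ B ^ 2 * ((3 * (n:ℝ) + 1) * ((n:ℝ) - 1)) :=
                mul_nonneg (sq_nonneg B)
                  (mul_nonneg (by linarith) (by linarith))
              nlinarith [hx]
    have hsummable : Summable (fun n : ℕ => 4 * B ^ 2 / ((n : ℝ) + 1) ^ 2) := by
      have h2 : Summable (fun n : ℕ => 1 / ((n : ℝ) ^ 2)) :=
        Real.summable_one_div_nat_pow.2 (by norm_num)
      have h3 := (summable_nat_add_iff (f := fun n : ℕ => 1 / ((n : ℝ) ^ 2)) 1).2 h2
      have h4 : Summable (fun n : ℕ => 1 / ((n : ℝ) + 1) ^ 2) := by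
        refine h3.congr fun n => ?_
        push_cast
        ring
      refine (h4.mul_left (4 * B ^ 2)).congr fun n => ?_
      rw [mul_one_div]
    have hlt : ∑' n, ∫⁻ ω, ‖f n ω‖₊ ∂μ < ⊤ := by
      calc ∑' n, ∫⁻ ω, ‖f n ω‖₊ ∂μ
          ≤ ∑' n : ℕ, ENNReal.ofReal (4 * B ^ 2 / ((n : ℝ) + 1) ^ 2) := ENNReal.tsum_le_tsum hb
        _ = ENNReal.ofReal (∑' n : ℕ, 4 * B ^ 2 / ((n : ℝ) + 1) ^ 2) :=
            (ENNReal.ofReal_tsum_of_nonneg (fun n => by positivity) hsummable).symm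
        _ < ⊤ := ENNReal.ofReal_lt_top
    exact hlt.ne
  -- a.e. convergence of f n to 0, hence of T(n²)/n²
  have hfm' : ∀ n, AEMeasurable (fun ω => (‖f n ω‖₊ : ENNReal)) μ :=
    fun n => (hfmeas n).nnnorm.coe_nnreal_ennreal.aemeasurable
  rw [← lintegral_tsum hfm'] at hsum
  have hae : ∀ᵐ ω ∂μ, ∑' n, (‖f n ω‖₊ : ENNReal) < ⊤ :=
    ae_lt_top' (AEMeasurable.ennreal_tsum hfm') hsum
  have hsub : ∀ᵐ ω ∂μ, Tendsto (fun n : ℕ => T (n ^ 2) ω / ((n : ℝ) ^ 2)) atTop (nhds 0) := by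
    filter_upwards [hae] with ω hω
    have hsummable : Summable fun n => (‖f n ω‖₊ : ℝ) := by
      rw [← ENNReal.tsum_coe_ne_top_iff_summable_coe]
      exact hω.ne
    have hf0 : Tendsto (fun n => f n ω) atTop (nhds 0) := by
      have := hsummable.tendsto_atTop_zero
      refine this.congr fun n => ?_
      simp [Real.norm_eq_abs, abs_of_nonneg (hfnonneg n ω)]
    have hsq : Tendsto (fun n => Real.sqrt (f n ω)) atTop (nhds 0) := by
      have := (Real.continuous_sqrt.continuousAt (x := (0:ℝ))).tendsto.comp hf0
      simpa [Function.comp_def] using this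
    refine squeeze_zero_norm (fun n => ?_) hsq
    rw [Real.norm_eq_abs, ← Real.sqrt_sq_eq_abs]
  -- fill the gaps between consecutive squares
  filter_upwards [hsub, hbd_all] with ω hg hb
  have hsqrt_tendsto : Tendsto (fun m : ℕ => Nat.sqrt m) atTop atTop := by
    refine tendsto_atTop_atTop.2 fun c => ⟨c ^ 2, fun a ha => ?_⟩
    have := Nat.sqrt_le_sqrt ha
    rwa [Nat.sqrt_eq' c] at this
  set bnd : ℕ → ℝ := fun n => |T (n ^ 2) ω| / ((n : ℝ) ^ 2) + 3 * B / n with hbnd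
  have hbt : Tendsto bnd atTop (nhds 0) := by
    have h1 : Tendsto (fun n : ℕ => |T (n ^ 2) ω| / ((n : ℝ) ^ 2)) atTop (nhds 0) := by
      have := hg.abs
      simp only [abs_zero] at this
      refine this.congr fun n => ?_
      rw [abs_div, abs_of_nonneg (by positivity : (0:ℝ) ≤ (n : ℝ) ^ 2)]
    have h2 : Tendsto (fun n : ℕ => 3 * B / (n : ℝ)) atTop (nhds 0) :=
      tendsto_const_div_atTop_nhds_zero_nat (3 * B)
    simpa using h1.add h2
  have hcomp : Tendsto (fun m : ℕ => bnd (Nat.sqrt m)) atTop (nhds 0) :=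
    hbt.comp hsqrt_tendsto
  refine squeeze_zero_norm' ?_ hcomp
  filter_upwards [eventually_ge_atTop 1] with m hm
  set n := Nat.sqrt m with hn
  have hn1 : 1 ≤ n := by
    rw [hn]
    exact Nat.sqrt_pos.2 hm
  have h1 : n ^ 2 ≤ m := Nat.sqrt_le' m
  have h2 : m < (n + 1) ^ 2 := Nat.lt_succ_sqrt' m
  have hmsub : m - n ^ 2 ≤ 2 * n := by
    have : m < n ^ 2 + 2 * n + 1 := by nlinarith [h2]
    omega
  have hsplit : T m ω = T (n ^ 2) ω + ∑ i ∈ Finset.Ico (n ^ 2) m, Y i ω := by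
    simp only [T, Finset.range_eq_Ico]
    rw [← Finset.sum_Ico_consecutive _ (Nat.zero_le _) h1]
  have htail : |∑ i ∈ Finset.Ico (n ^ 2) m, Y i ω| ≤ 2 * (n : ℝ) * B := by
    calc |∑ i ∈ Finset.Ico (n ^ 2) m, Y i ω| ≤ ∑ i ∈ Finset.Ico (n ^ 2) m, |Y i ω| :=
          Finset.abs_sum_le_sum_abs _ _
      _ ≤ ∑ _i ∈ Finset.Ico (n ^ 2) m, B := Finset.sum_le_sum fun i _ => hb i
      _ = ((m - n ^ 2 : ℕ) : ℝ) * B := by rw [Finset.sum_const, Nat.card_Ico]; simp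
      _ ≤ 2 * (n : ℝ) * B := by
          have : ((m - n ^ 2 : ℕ) : ℝ) ≤ 2 * (n : ℝ) := by exact_mod_cast hmsub
          exact mul_le_mul_of_nonneg_right this hB.le
  have hnR : (0 : ℝ) < (n : ℝ) := by exact_mod_cast hn1
  have hn2 : (0 : ℝ) < (n : ℝ) ^ 2 := by positivity
  have hmR : (0 : ℝ) < (m : ℝ) := by exact_mod_cast hm
  have hn2m : ((n : ℝ) ^ 2) ≤ (m : ℝ) := by exact_mod_cast h1
  have hTm : |T m ω| ≤ |T (n ^ 2) ω| + 2 * (n : ℝ) * B := by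
    rw [hsplit]
    exact (abs_add_le _ _).trans (add_le_add le_rfl htail)
  rw [Real.norm_eq_abs, abs_div, abs_of_pos hmR]
  calc |T m ω| / (m : ℝ) ≤ (|T (n ^ 2) ω| + 2 * (n : ℝ) * B) / (m : ℝ) := by gcongr
    _ ≤ (|T (n ^ 2) ω| + 2 * (n : ℝ) * B) / ((n : ℝ) ^ 2) := by
        apply div_le_div_of_nonneg_left _ hn2 hn2m
        positivity
    _ = |T (n ^ 2) ω| / ((n : ℝ) ^ 2) + 2 * B / (n : ℝ) := by
        field_simp
    _ ≤ bnd n := by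
        show |T (n ^ 2) ω| / ((n : ℝ) ^ 2) + 2 * B / (n : ℝ) ≤
          |T (n ^ 2) ω| / ((n : ℝ) ^ 2) + 3 * B / (n : ℝ)
        have h23 : 2 * B / (n : ℝ) ≤ 3 * B / (n : ℝ) := by
          apply div_le_div_of_nonneg_right ?_ hnR.le
          linarith
        linarith

/-- **Theorem 2 (consistency of WIS with multiple behavior policies), probabilistic content.**
If `(W_n, G_n)` are mutually independent `ℝ²`-valued random vectors with `0 ≤ W_n ≤ C` a.s.,
`0 ≤ G_n ≤ 1` a.s., `E[W_n] = 1`, and `E[W_n G_n] = ρ` for every `n`, then the weighted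
importance sampling estimates `(∑_{i<n} W_i G_i) / (∑_{i<n} W_i)` converge almost surely to `ρ`. -/
theorem wis_consistent_multiple_behavior_policies
    {Ω : Type*} [MeasurableSpace Ω] (μ : Measure Ω) [IsProbabilityMeasure μ]
    (C : ℝ) (hC : 0 < C) (ρ : ℝ)
    (X : ℕ → Ω → ℝ × ℝ) (hmeas : ∀ n, Measurable (X n))
    (hindep : iIndepFun X μ)
    (hW_bdd : ∀ n, ∀ᵐ ω ∂μ, 0 ≤ (X n ω).1 ∧ (X n ω).1 ≤ C)
    (hG_bdd : ∀ n, ∀ᵐ ω ∂μ, 0 ≤ (X n ω).2 ∧ (X n ω).2 ≤ 1)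
    (hW_mean : ∀ n, ∫ ω, (X n ω).1 ∂μ = 1)
    (hWG_mean : ∀ n, ∫ ω, (X n ω).1 * (X n ω).2 ∂μ = ρ) :
    ∀ᵐ ω ∂μ, Tendsto
      (fun n : ℕ => (∑ i ∈ Finset.range n, (X i ω).1 * (X i ω).2) /
        (∑ i ∈ Finset.range n, (X i ω).1))
      atTop (nhds ρ) := by
  set B : ℝ := C + 1 + |ρ| with hBdef
  have hB : 0 < B := by positivity
  have hWm : ∀ n, Measurable fun ω => (X n ω).1 := fun n => measurable_fst.comp (hmeas n)
  have hWGm : ∀ n, Measurable fun ω => (X n ω).1 * (X n ω).2 :=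
    fun n => (measurable_fst.comp (hmeas n)).mul (measurable_snd.comp (hmeas n))
  have hWint : ∀ n, Integrable (fun ω => (X n ω).1) μ := fun n =>
    (integrable_const C).mono' (hWm n).aestronglyMeasurable ((hW_bdd n).mono fun ω h => by
      rw [Real.norm_eq_abs, abs_of_nonneg h.1]; exact h.2)
  have hWGint : ∀ n, Integrable (fun ω => (X n ω).1 * (X n ω).2) μ := fun n =>
    (integrable_const C).mono' (hWGm n).aestronglyMeasurable (by
      filter_upwards [hW_bdd n, hG_bdd n] with ω h1 h2
      rw [Real.norm_eq_abs, abs_of_nonneg (mul_nonneg h1.1 h2.1)]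
      calc (X n ω).1 * (X n ω).2 ≤ C * 1 := mul_le_mul h1.2 h2.2 h2.1 hC.le
        _ = C := mul_one C)
  -- SLLN applied to `W - 1`
  have hY1 : ∀ᵐ ω ∂μ, Tendsto
      (fun n : ℕ => (∑ i ∈ Finset.range n, ((X i ω).1 - 1)) / n) atTop (nhds 0) := by
    refine slln_bdd μ B hB (fun n ω => (X n ω).1 - 1)
      (fun n => (hWm n).sub measurable_const) (fun i j hij => ?_) (fun n => ?_) (fun n => ?_)
    · exact (hindep.indepFun hij).comp
        (measurable_fst.sub measurable_const) (measurable_fst.sub measurable_const)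
    · filter_upwards [hW_bdd n] with ω h
      have := abs_nonneg ρ
      rw [abs_le]
      constructor <;> [linarith [h.1]; linarith [h.2]]
    · rw [integral_sub (hWint n) (integrable_const 1)]
      simp [hW_mean n]
  -- SLLN applied to `W G - ρ`
  have hY2 : ∀ᵐ ω ∂μ, Tendsto
      (fun n : ℕ => (∑ i ∈ Finset.range n, ((X i ω).1 * (X i ω).2 - ρ)) / n)
      atTop (nhds 0) := by
    refine slln_bdd μ B hB (fun n ω => (X n ω).1 * (X n ω).2 - ρ)
      (fun n => (hWGm n).sub measurable_const) (fun i j hij => ?_) (fun n => ?_) (fun n => ?_)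
    · exact (hindep.indepFun hij).comp
        ((measurable_fst.mul measurable_snd).sub measurable_const)
        ((measurable_fst.mul measurable_snd).sub measurable_const)
    · filter_upwards [hW_bdd n, hG_bdd n] with ω h1 h2
      have habs : |(X n ω).1 * (X n ω).2| ≤ C := by
        rw [abs_of_nonneg (mul_nonneg h1.1 h2.1)]
        calc (X n ω).1 * (X n ω).2 ≤ C * 1 := mul_le_mul h1.2 h2.2 h2.1 hC.le
          _ = C := mul_one C
      calc |(X n ω).1 * (X n ω).2 - ρ| ≤ |(X n ω).1 * (X n ω).2| + |ρ| := abs_sub _ _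
        _ ≤ C + |ρ| := by linarith
        _ ≤ B := by rw [hBdef]; linarith
    · rw [integral_sub (hWGint n) (integrable_const ρ)]
      simp [hWG_mean n]
  filter_upwards [hY1, hY2] with ω h1 h2
  have hWlim : Tendsto (fun n : ℕ => (∑ i ∈ Finset.range n, (X i ω).1) / n)
      atTop (nhds 1) := by
    have h1' : Tendsto
        (fun n : ℕ => (∑ i ∈ Finset.range n, ((X i ω).1 - 1)) / n + 1) atTop (nhds 1) := by
      simpa using h1.add (tendsto_const_nhds (x := (1:ℝ)))
    refine h1'.congr' ?_
    filter_upwards [eventually_ge_atTop 1] with n hn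
    have hn0 : (n : ℝ) ≠ 0 := by positivity
    rw [Finset.sum_sub_distrib, Finset.sum_const, Finset.card_range, nsmul_eq_mul, mul_one]
    field_simp
    ring
  have hWGlim : Tendsto (fun n : ℕ => (∑ i ∈ Finset.range n, (X i ω).1 * (X i ω).2) / n)
      atTop (nhds ρ) := by
    have h2' : Tendsto
        (fun n : ℕ => (∑ i ∈ Finset.range n, ((X i ω).1 * (X i ω).2 - ρ)) / n + ρ)
        atTop (nhds ρ) := by
      simpa using h2.add (tendsto_const_nhds (x := ρ))
    refine h2'.congr' ?_
    filter_upwards [eventually_ge_atTop 1] with n hn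
    have hn0 : (n : ℝ) ≠ 0 := by positivity
    rw [Finset.sum_sub_distrib, Finset.sum_const, Finset.card_range, nsmul_eq_mul]
    field_simp
    ring
  have hdiv := hWGlim.div hWlim one_ne_zero
  rw [div_one] at hdiv
  refine hdiv.congr' ?_
  filter_upwards [eventually_ge_atTop 1] with n hn
  have hn0 : (n : ℝ) ≠ 0 := by positivity
  simp only [Pi.div_apply]
  rw [div_div_div_comm, div_self hn0, div_one]
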